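/- Full surplus extraction with binary supports: let 𝒪 ⊆ {0,1}ⁿ be a downward-closed feasible outcome set containing the all-zero outcome, and let a ∈ (ℝ≥0)ⁿ. Then there exists a mechanism M = (f, p) on the full domain 𝒱 = (ℝ≥0)ⁿ that is incentive-compatible, individually rational, and nonbossy, such that: (i) for every v ∈ (ℝ≥0)ⁿ with vᵢ ∈ {0, aᵢ} for all i, the revenue Σᵢ pᵢ(v) equals the optimal welfare max_{o ∈ 𝒪} Σᵢ vᵢ·oᵢ; and (ii) the revenue is weakly monotone in the values: if vᵢ ≤ vᵢ' for all i, then Σᵢ pᵢ(v) ≤ Σᵢ pᵢ(v'). -/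

import Mathlib

/-! Statement 14: full surplus extraction with binary supports, by an IC, IR, nonbossy mechanism, with weakly monotone revenue. -/

open Function NNReal

/-- Quasilinear utility of agent `i` with value `vi`, allocation `S` (agent `i`
receives an item iff `i ∈ S`) and payment `qi`. -/
noncomputable def utility {n : ℕ} (vi : ℝ≥0) (i : Fin n) (S : Finset (Fin n))
    (qi : ℝ≥0) : ℝ :=
  (if i ∈ S then (vi : ℝ) else 0) - (qi : ℝ)

/-- Incentive-compatibility in a single-parameter environment, where ties are
broken in favor of receiving an item. -/
def SPIC {n : ℕ} (f : (Fin n → ℝ≥0) → Finset (Fin n))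
    (p : (Fin n → ℝ≥0) → Fin n → ℝ≥0) : Prop :=
  ∀ (v : Fin n → ℝ≥0) (i : Fin n) (x : ℝ≥0),
    utility (v i) i (f v) (p v i) >
      utility (v i) i (f (update v i x)) (p (update v i x) i) ∨
    (utility (v i) i (f v) (p v i) =
      utility (v i) i (f (update v i x)) (p (update v i x) i) ∧
      (i ∈ f (update v i x) → i ∈ f v))

/-- Individual rationality. -/
def SPIR {n : ℕ} (f : (Fin n → ℝ≥0) → Finset (Fin n))
    (p : (Fin n → ℝ≥0) → Fin n → ℝ≥0) : Prop :=
  ∀ (v : Fin n → ℝ≥0) (i : Fin n), 0 ≤ utility (v i) i (f v) (p v i)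

/-- Nonbossiness: no agent can change the outcome or payments of others without
changing their own allocation or payment. -/
def SPNB {n : ℕ} (f : (Fin n → ℝ≥0) → Finset (Fin n))
    (p : (Fin n → ℝ≥0) → Fin n → ℝ≥0) : Prop :=
  ∀ (v : Fin n → ℝ≥0) (i : Fin n) (x : ℝ≥0),
    (i ∈ f v ↔ i ∈ f (update v i x)) → p v i = p (update v i x) i →
    f v = f (update v i x) ∧ p v = p (update v i x)

namespace Stmt14

variable {n : ℕ}

noncomputable def E (n : ℕ) : Finset (Fin n) ≃ Fin (Fintype.card (Finset (Fin n))) :=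
  Fintype.equivFin _

variable (Feas : Finset (Finset (Fin n))) (a : Fin n → ℝ≥0)

/-- Feasible sets contained in `A`. -/
def FA (A : Finset (Fin n)) : Finset (Finset (Fin n)) := Feas.filter (· ⊆ A)

noncomputable def Mv (A : Finset (Fin n)) : ℝ≥0 := (FA Feas A).sup (fun S => ∑ i ∈ S, a i)

noncomputable def Arg (A : Finset (Fin n)) : Finset (Finset (Fin n)) :=
  (FA Feas A).filter (fun S => ∑ i ∈ S, a i = Mv Feas a A)

lemma empty_mem_FA (hF : (∅ : Finset (Fin n)) ∈ Feas) (A : Finset (Fin n)) :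
    (∅ : Finset (Fin n)) ∈ FA Feas A := by
  simp [FA, hF]

lemma Arg_nonempty (hF : (∅ : Finset (Fin n)) ∈ Feas) (A : Finset (Fin n)) :
    (Arg Feas a A).Nonempty := by
  obtain ⟨S, hS, hval⟩ := Finset.exists_mem_eq_sup (FA Feas A) ⟨∅, empty_mem_FA Feas hF A⟩
    (fun S => ∑ i ∈ S, a i)
  exact ⟨S, Finset.mem_filter.2 ⟨hS, hval.symm⟩⟩

noncomputable def g (hF : (∅ : Finset (Fin n)) ∈ Feas) (A : Finset (Fin n)) : Finset (Fin n) :=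
  (E n).symm (((Arg Feas a A).image (E n)).min' ((Arg_nonempty Feas a hF A).image _))

lemma g_mem (hF : (∅ : Finset (Fin n)) ∈ Feas) (A : Finset (Fin n)) :
    g Feas a hF A ∈ Arg Feas a A := by
  have h := Finset.min'_mem ((Arg Feas a A).image (E n)) ((Arg_nonempty Feas a hF A).image _)
  obtain ⟨S, hS, hES⟩ := Finset.mem_image.1 h
  have : g Feas a hF A = S := by
    simp [g, ← hES]
  rw [this]; exact hS

lemma g_min (hF : (∅ : Finset (Fin n)) ∈ Feas) (A : Finset (Fin n)) {T : Finset (Fin n)}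
    (hT : T ∈ Arg Feas a A) : E n (g Feas a hF A) ≤ E n T := by
  have h := Finset.min'_le ((Arg Feas a A).image (E n)) (E n T) (Finset.mem_image_of_mem _ hT)
  simpa [g] using h

lemma g_feas (hF : (∅ : Finset (Fin n)) ∈ Feas) (A : Finset (Fin n)) :
    g Feas a hF A ∈ Feas :=
  (Finset.mem_filter.1 (Finset.mem_filter.1 (g_mem Feas a hF A)).1).1

lemma g_subset (hF : (∅ : Finset (Fin n)) ∈ Feas) (A : Finset (Fin n)) :
    g Feas a hF A ⊆ A :=
  (Finset.mem_filter.1 (Finset.mem_filter.1 (g_mem Feas a hF A)).1).2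

lemma g_val (hF : (∅ : Finset (Fin n)) ∈ Feas) (A : Finset (Fin n)) :
    ∑ i ∈ g Feas a hF A, a i = Mv Feas a A :=
  (Finset.mem_filter.1 (g_mem Feas a hF A)).2

lemma Mv_mono (hF : (∅ : Finset (Fin n)) ∈ Feas) {A B : Finset (Fin n)} (h : A ⊆ B) :
    Mv Feas a A ≤ Mv Feas a B := by
  apply Finset.sup_mono
  intro S hS
  rw [FA, Finset.mem_filter] at hS ⊢
  exact ⟨hS.1, hS.2.trans h⟩

lemma g_erase (hF : (∅ : Finset (Fin n)) ∈ Feas) {A : Finset (Fin n)} {i : Fin n}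
    (hig : i ∉ g Feas a hF A) :
    g Feas a hF (A.erase i) = g Feas a hF A := by
  set A' := A.erase i with hA'
  have hsub : g Feas a hF A ⊆ A' := fun j hj =>
    Finset.mem_erase.2 ⟨fun hji => hig (hji ▸ hj), g_subset Feas a hF A hj⟩
  have hgFA' : g Feas a hF A ∈ FA Feas A' :=
    Finset.mem_filter.2 ⟨g_feas Feas a hF A, hsub⟩
  have hM : Mv Feas a A' = Mv Feas a A := by
    refine le_antisymm (Mv_mono Feas a hF (Finset.erase_subset _ _)) ?_
    rw [← g_val Feas a hF A]
    exact Finset.le_sup (f := fun S => ∑ i ∈ S, a i) hgFA'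
  have hgArg' : g Feas a hF A ∈ Arg Feas a A' :=
    Finset.mem_filter.2 ⟨hgFA', by rw [hM]; exact g_val Feas a hF A⟩
  have hArgSub : Arg Feas a A' ⊆ Arg Feas a A := by
    intro S hS
    rw [Arg, Finset.mem_filter, FA, Finset.mem_filter] at hS
    exact Finset.mem_filter.2 ⟨Finset.mem_filter.2
      ⟨hS.1.1, hS.1.2.trans (Finset.erase_subset _ _)⟩, hS.2.trans hM⟩
  have h1 : E n (g Feas a hF A') ≤ E n (g Feas a hF A) := g_min Feas a hF A' hgArg'
  have h2 : E n (g Feas a hF A) ≤ E n (g Feas a hF A') :=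
    g_min Feas a hF A (hArgSub (g_mem Feas a hF A'))
  exact (E n).injective (le_antisymm h1 h2)

/-- Active agents. -/
noncomputable def Act (a : Fin n → ℝ≥0) (v : Fin n → ℝ≥0) : Finset (Fin n) :=
  Finset.univ.filter (fun i => a i ≤ v i)

end Stmt14

namespace Stmt14

lemma Act_update_same {n : ℕ} (a v : Fin n → ℝ≥0) (i : Fin n) (x : ℝ≥0)
    (h : a i ≤ v i ↔ a i ≤ x) : Act a (update v i x) = Act a v := by
  ext j
  simp only [Act, Finset.mem_filter, Finset.mem_univ, true_and]
  rcases eq_or_ne j i with rfl | hj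
  · simp [h]
  · simp [update_of_ne hj]

lemma Act_update_erase {n : ℕ} (a v : Fin n → ℝ≥0) (i : Fin n) (x : ℝ≥0)
    (hx : ¬ a i ≤ x) : Act a (update v i x) = (Act a v).erase i := by
  ext j
  simp only [Act, Finset.mem_filter, Finset.mem_univ, true_and, Finset.mem_erase]
  rcases eq_or_ne j i with rfl | hj
  · simp [hx]
  · simp [update_of_ne hj, hj]

end Stmt14

/-- Full surplus extraction with binary supports: for any downward-closed
feasible set `Feas` containing the empty outcome, and any `a : Fin n → ℝ≥0`,
there is an IC, IR, nonbossy mechanism whose revenue equals the optimal welfare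
at every valuation vector with `v i ∈ {0, a i}` for every `i`, and whose
revenue is weakly monotone in the values. -/
theorem binarySupport_fullExtraction (n : ℕ) (Feas : Finset (Finset (Fin n)))
    (hdc : ∀ S ∈ Feas, ∀ T : Finset (Fin n), T ⊆ S → T ∈ Feas)
    (hempty : (∅ : Finset (Fin n)) ∈ Feas)
    (a : Fin n → ℝ≥0) :
    ∃ (f : (Fin n → ℝ≥0) → Finset (Fin n)) (p : (Fin n → ℝ≥0) → Fin n → ℝ≥0),
      (∀ v, f v ∈ Feas) ∧ SPIC f p ∧ SPIR f p ∧ SPNB f p ∧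
      (∀ v : Fin n → ℝ≥0, (∀ i, v i = 0 ∨ v i = a i) →
        ∑ i, p v i = Feas.sup' ⟨∅, hempty⟩ (fun S => ∑ i ∈ S, v i)) ∧
      (∀ v v' : Fin n → ℝ≥0, (∀ i, v i ≤ v' i) → ∑ i, p v i ≤ ∑ i, p v' i) := by
  classical
  set f : (Fin n → ℝ≥0) → Finset (Fin n) :=
    fun v => Stmt14.g Feas a hempty (Stmt14.Act a v) with hf
  set p : (Fin n → ℝ≥0) → Fin n → ℝ≥0 :=
    fun v i => if i ∈ f v then a i else 0 with hp
  have hfA : ∀ v, f v ⊆ Stmt14.Act a v := fun v => Stmt14.g_subset Feas a hempty _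
  have hmem : ∀ v i, i ∈ f v → a i ≤ v i := by
    intro v i hi
    have := hfA v hi
    simpa [Stmt14.Act] using this
  have hpin : ∀ v i, i ∈ f v → p v i = a i := by intro v i hi; simp [hp, hi]
  have hpnot : ∀ v i, i ∉ f v → p v i = 0 := by intro v i hi; simp [hp, hi]
  have hrev : ∀ v, ∑ i, p v i = Stmt14.Mv Feas a (Stmt14.Act a v) := by
    intro v
    calc ∑ i, p v i = ∑ i ∈ Finset.univ ∩ f v, a i := Finset.sum_ite_mem _ _ _
      _ = ∑ i ∈ f v, a i := by rw [Finset.univ_inter]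
      _ = _ := Stmt14.g_val Feas a hempty _
  refine ⟨f, p, fun v => Stmt14.g_feas Feas a hempty _, ?_, ?_, ?_, ?_, ?_⟩
  · -- SPIC
    intro v i x
    by_cases hv : a i ≤ v i
    · by_cases hx : a i ≤ x
      · have hA : Stmt14.Act a (update v i x) = Stmt14.Act a v :=
          Stmt14.Act_update_same a v i x (iff_of_true hv hx)
        have hfe : f (update v i x) = f v := by rw [hf]; simp only [hA]
        have hpe : p (update v i x) i = p v i := by simp only [hp, hfe]
        right
        rw [hfe, hpe]
        exact ⟨rfl, fun h => h⟩
      · have hni : i ∉ f (update v i x) := fun h => hx (by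
          have := hmem (update v i x) i h
          simpa using this)
        have hdev : utility (v i) i (f (update v i x)) (p (update v i x) i) = 0 := by
          simp [utility, hni, hpnot _ i hni]
        by_cases hiv : i ∈ f v
        · rcases lt_or_eq_of_le hv with hlt | heq
          · left
            rw [hdev]
            simp only [utility, hiv, if_true, hpin v i hiv]
            have : (a i : ℝ) < (v i : ℝ) := by exact_mod_cast hlt
            linarith
          · right
            rw [hdev]
            refine ⟨?_, fun h => absurd h hni⟩
            simp [utility, hiv, hpin v i hiv, ← heq]
        · right
          rw [hdev]
          exact ⟨by simp [utility, hiv, hpnot v i hiv], fun h => absurd h hni⟩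
    · have hni : i ∉ f v := fun h => hv (hmem v i h)
      have htr : utility (v i) i (f v) (p v i) = 0 := by
        simp [utility, hni, hpnot v i hni]
      by_cases hiv' : i ∈ f (update v i x)
      · left
        rw [htr]
        simp only [utility, hiv', if_true, hpin _ i hiv']
        have : (v i : ℝ) < (a i : ℝ) := by exact_mod_cast lt_of_not_ge hv
        linarith
      · right
        rw [htr]
        exact ⟨by simp [utility, hiv', hpnot _ i hiv'], fun h => absurd h hiv'⟩
  · -- SPIR
    intro v i
    by_cases hi : i ∈ f v
    · have : (a i : ℝ) ≤ (v i : ℝ) := by exact_mod_cast hmem v i hi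
      simp only [utility, hi, if_true, hpin v i hi]
      linarith
    · simp [utility, hi, hpnot v i hi]
  · -- SPNB
    intro v i x hiff _
    suffices hfe : f v = f (update v i x) by
      refine ⟨hfe, ?_⟩
      funext j
      simp [hp, hfe]
    by_cases hv : a i ≤ v i
    · by_cases hx : a i ≤ x
      · rw [hf]
        simp only [Stmt14.Act_update_same a v i x (iff_of_true hv hx)]
      · have hA : Stmt14.Act a (update v i x) = (Stmt14.Act a v).erase i :=
          Stmt14.Act_update_erase a v i x hx
        have hni' : i ∉ f (update v i x) := fun h => hx (by
          have := hmem (update v i x) i h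
          simpa using this)
        have hni : i ∉ f v := fun h => hni' (hiff.mp h)
        rw [hf]
        simp only [hA]
        exact (Stmt14.g_erase Feas a hempty hni).symm
    · by_cases hx : a i ≤ x
      · have hAv : Stmt14.Act a v = (Stmt14.Act a (update v i x)).erase i := by
          have h1 : Stmt14.Act a (update (update v i x) i (v i)) =
              (Stmt14.Act a (update v i x)).erase i :=
            Stmt14.Act_update_erase a (update v i x) i (v i) hv
          rwa [Function.update_idem, Function.update_eq_self] at h1
        have hni : i ∉ f v := fun h => hv (hmem v i h)
        have hni' : i ∉ f (update v i x) := fun h => hni (hiff.mpr h)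
        simp only [hf]
        rw [hAv]
        exact Stmt14.g_erase Feas a hempty hni'
      · rw [hf]
        simp only [Stmt14.Act_update_same a v i x (iff_of_false hv hx)]
  · -- binary revenue
    intro v hbin
    rw [hrev]
    have hval : ∀ i ∈ Stmt14.Act a v, v i = a i := by
      intro i hi
      have hi' : a i ≤ v i := by simpa [Stmt14.Act] using hi
      rcases hbin i with h0 | ha
      · rw [h0]
        rw [h0] at hi'
        exact (le_antisymm hi' zero_le).symm
      · exact ha
    have hzero : ∀ i, i ∉ Stmt14.Act a v → v i = 0 := by
      intro i hi
      have hi' : ¬ a i ≤ v i := by simpa [Stmt14.Act] using hi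
      rcases hbin i with h0 | ha
      · exact h0
      · exact absurd (ha ▸ le_refl (a i) : a i ≤ v i) hi'
    apply le_antisymm
    · apply Finset.sup_le
      intro S hS
      rw [Stmt14.FA, Finset.mem_filter] at hS
      have heq : ∑ i ∈ S, a i = ∑ i ∈ S, v i :=
        Finset.sum_congr rfl (fun i hi => (hval i (hS.2 hi)).symm)
      rw [heq]
      exact Finset.le_sup' (fun S => ∑ i ∈ S, v i) hS.1
    · apply Finset.sup'_le
      intro S hS
      have h1 : ∑ i ∈ S, v i = ∑ i ∈ S.filter (· ∈ Stmt14.Act a v), v i := by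
        rw [Finset.sum_filter_of_ne]
        intro i _ hne
        by_contra hni
        exact hne (hzero i hni)
      have h2 : ∑ i ∈ S.filter (· ∈ Stmt14.Act a v), v i
          = ∑ i ∈ S.filter (· ∈ Stmt14.Act a v), a i :=
        Finset.sum_congr rfl (fun i hi => hval i (Finset.mem_filter.1 hi).2)
      have hmemFA : S.filter (· ∈ Stmt14.Act a v) ∈ Stmt14.FA Feas (Stmt14.Act a v) :=
        Finset.mem_filter.2 ⟨hdc S hS _ (Finset.filter_subset _ _),
          fun i hi => (Finset.mem_filter.1 hi).2⟩
      rw [h1, h2]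
      exact Finset.le_sup (f := fun S => ∑ i ∈ S, a i) hmemFA
  · -- monotone revenue
    intro v v' hle
    rw [hrev, hrev]
    refine Stmt14.Mv_mono Feas a hempty ?_
    intro i hi
    simp only [Stmt14.Act, Finset.mem_filter, Finset.mem_univ, true_and] at hi ⊢
    exact hi.trans (hle i)
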